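/- arXiv:1905.03831 — 2 statements merged into one kernel-verified Lean document; each statement's English description precedes it below -/
import Mathlib

section
/- Let L be a self-adjoint real matrix and let (Uⁿ) be vectors satisfying the recurrence Φ ∘ (Uⁿ⁺¹ − 2Uⁿ + Uⁿ⁻¹) = LUⁿ, where Φ ∘ denotes multiplication by a fixed positive diagonal matrix D (entries Φᵢ > 0). Define Γⁿ = Uⁿ − Uⁿ⁻¹ and Rⁿ = ⟨DΓⁿ, Γⁿ⟩ + (1/4)⟨LΓⁿ, Γⁿ⟩ − (1/4)⟨L(Uⁿ + Uⁿ⁻¹), Uⁿ + Uⁿ⁻¹⟩. Then Rⁿ⁺¹ = Rⁿ for all n ≥ 1. -/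
open Matrix

theorem discrete_energy_conserved {n : ℕ} (L : Matrix (Fin n) (Fin n) ℝ)
    (hL : L.IsSymm) (d : Fin n → ℝ) (hd : ∀ i, 0 < d i)
    (U : ℕ → (Fin n → ℝ))
    (hrec : ∀ k, 1 ≤ k →
      (Matrix.diagonal d) *ᵥ (U (k + 1) - 2 • U k + U (k - 1)) = L *ᵥ U k)
    (Γ : ℕ → (Fin n → ℝ)) (hΓ : ∀ k, 1 ≤ k → Γ k = U k - U (k - 1))
    (R : ℕ → ℝ)
    (hR : ∀ k, 1 ≤ k → R k =
      ((Matrix.diagonal d) *ᵥ Γ k) ⬝ᵥ Γ k + (1/4) * ((L *ᵥ Γ k) ⬝ᵥ Γ k)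
        - (1/4) * ((L *ᵥ (U k + U (k - 1))) ⬝ᵥ (U k + U (k - 1)))) :
    ∀ k, 1 ≤ k → R (k + 1) = R k := by
  intro k hk
  have hLsym : ∀ x y : Fin n → ℝ, (L *ᵥ x) ⬝ᵥ y = (L *ᵥ y) ⬝ᵥ x := by
    intro x y
    rw [dotProduct_comm, dotProduct_mulVec, ← mulVec_transpose, hL.eq,
      dotProduct_comm]
  have hDsym : ∀ x y : Fin n → ℝ,
      ((Matrix.diagonal d) *ᵥ x) ⬝ᵥ y = ((Matrix.diagonal d) *ᵥ y) ⬝ᵥ x := by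
    intro x y
    rw [dotProduct_comm, dotProduct_mulVec, ← mulVec_transpose,
      (Matrix.isSymm_diagonal d).eq, dotProduct_comm]
  set a := U (k - 1) with ha
  set b := U k with hb
  set c := U (k + 1) with hc
  have h1 : U (k + 1 - 1) = b := by simp [hb]
  rw [hR (k + 1) (by omega), hR k hk, hΓ (k + 1) (by omega), hΓ k hk, h1]
  have key : ((Matrix.diagonal d) *ᵥ (c - 2 • b + a)) ⬝ᵥ (c - a)
      = (L *ᵥ b) ⬝ᵥ (c - a) := by rw [hrec k hk]
  simp only [mulVec_add, mulVec_sub, mulVec_smul, add_dotProduct,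
    sub_dotProduct, smul_dotProduct, dotProduct_add, dotProduct_sub,
    smul_eq_mul] at key ⊢
  simp only [← ha, ← hb, ← hc] at key ⊢
  simp only [hLsym c b, hLsym c a, hLsym b a, hDsym c b, hDsym c a, hDsym b a] at key ⊢
  ring_nf at key ⊢
  linarith [key]
end

section
/- Under the hypotheses of the discrete energy conservation (D positive diagonal with min entry Φ_min, L symmetric with eigenvalues in [−M, −m], 0 < m ≤ M), if Φ_min > M/4 then the conserved quantity Rⁿ = ⟨DΓⁿ, Γⁿ⟩ + (1/4)⟨LΓⁿ, Γⁿ⟩ − (1/4)⟨L(Uⁿ+Uⁿ⁻¹), Uⁿ+Uⁿ⁻¹⟩ satisfies (Φ_min − M/4)‖Γⁿ‖² + (m/4)‖Uⁿ+Uⁿ⁻¹‖² ≤ Rⁿ ≤ (Φ_max − m/4)‖Γⁿ‖² + (M/4)‖Uⁿ+Uⁿ⁻¹‖², so Rⁿ is equivalent (up to positive constants) to the energy ‖Uⁿ‖² + ‖Uⁿ⁻¹‖². -/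
open Matrix Pointwise

lemma quad_le_of_spectrum {n : ℕ} (A : Matrix (Fin n) (Fin n) ℝ) (hA : A.IsHermitian)
    (c : ℝ) (h : ∀ μ ∈ spectrum ℝ A, μ ≤ c) (x : Fin n → ℝ) :
    (A *ᵥ x) ⬝ᵥ x ≤ c * (x ⬝ᵥ x) := by
  set C : Matrix (Fin n) (Fin n) ℝ := (algebraMap ℝ (Matrix (Fin n) (Fin n) ℝ)) c - A with hCdef
  have hAt : Aᵀ = A := by simpa using hA.eq
  have hC : C.IsHermitian := by
    simp [Matrix.IsHermitian, hCdef, Matrix.conjTranspose_sub, hAt,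
      Algebra.algebraMap_eq_smul_one, Matrix.conjTranspose_smul]
  have hpsd : C.PosSemidef := by
    refine (Matrix.IsHermitian.posSemidef_iff_eigenvalues_nonneg hC).mpr fun i => show (0:ℝ) ≤ _ from ?_
    have hmem := Matrix.IsHermitian.eigenvalues_mem_spectrum_real hC i
    have hsp : spectrum ℝ C = ({c} : Set ℝ) - spectrum ℝ A := by
      rw [hCdef, ← spectrum.singleton_sub_eq]
    rw [hsp] at hmem
    obtain ⟨r, hr, s, hs, hrs⟩ := Set.mem_sub.mp hmem
    rw [Set.mem_singleton_iff] at hr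
    have := h s hs
    linarith [hrs.symm, hr ▸ (le_refl r)]
  have h2 := hpsd.dotProduct_mulVec_nonneg x
  have hstar : star x = x := by simp
  rw [hstar] at h2
  have hmv : C *ᵥ x = c • x - A *ᵥ x := by
    simp [hCdef, Matrix.sub_mulVec, Algebra.algebraMap_eq_smul_one, Matrix.smul_mulVec]
  rw [hmv, dotProduct_sub, dotProduct_smul] at h2
  have : (A *ᵥ x) ⬝ᵥ x = x ⬝ᵥ (A *ᵥ x) := dotProduct_comm _ _
  rw [this]
  simpa [smul_eq_mul] using h2

lemma quad_ge_of_spectrum {n : ℕ} (A : Matrix (Fin n) (Fin n) ℝ) (hA : A.IsSymm)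
    (c : ℝ) (h : ∀ μ ∈ spectrum ℝ A, c ≤ μ) (x : Fin n → ℝ) :
    c * (x ⬝ᵥ x) ≤ (A *ᵥ x) ⬝ᵥ x := by
  have hA' : (-A).IsHermitian := by
    simpa [Matrix.IsHermitian, Matrix.conjTranspose_neg] using congrArg Neg.neg hA
  have hspec : ∀ μ ∈ spectrum ℝ (-A), μ ≤ -c := by
    intro μ hμ
    have : -μ ∈ spectrum ℝ A := by
      rw [← spectrum.neg_eq] at hμ
      simpa using hμ
    linarith [h _ this]
  have := quad_le_of_spectrum (-A) hA' (-c) hspec x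
  rw [Matrix.neg_mulVec, neg_dotProduct] at this
  linarith

theorem energy_equivalence {n : ℕ} (L : Matrix (Fin n) (Fin n) ℝ) (hL : L.IsSymm)
    (m M : ℝ) (hm : 0 < m) (hmM : m ≤ M)
    (hspec : ∀ μ ∈ spectrum ℝ L, -M ≤ μ ∧ μ ≤ -m)
    (d : Fin n → ℝ) (Φmin Φmax : ℝ)
    (hd : ∀ i, Φmin ≤ d i ∧ d i ≤ Φmax)
    (hΦ : M / 4 < Φmin)
    (U V : Fin n → ℝ) (Γ : Fin n → ℝ) (hΓ : Γ = U - V) (R : ℝ)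
    (hR : R = ((Matrix.diagonal d) *ᵥ Γ) ⬝ᵥ Γ + (1/4) * ((L *ᵥ Γ) ⬝ᵥ Γ)
            - (1/4) * ((L *ᵥ (U + V)) ⬝ᵥ (U + V))) :
    (Φmin - M / 4) * (Γ ⬝ᵥ Γ) + (m / 4) * ((U + V) ⬝ᵥ (U + V)) ≤ R ∧
    R ≤ (Φmax - m / 4) * (Γ ⬝ᵥ Γ) + (M / 4) * ((U + V) ⬝ᵥ (U + V)) := by
  have hLH : L.IsHermitian := by simpa [Matrix.IsHermitian] using hL.eq
  have hGle : (L *ᵥ Γ) ⬝ᵥ Γ ≤ (-m) * (Γ ⬝ᵥ Γ) :=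
    quad_le_of_spectrum L hLH (-m) (fun μ hμ => (hspec μ hμ).2) Γ
  have hGge : (-M) * (Γ ⬝ᵥ Γ) ≤ (L *ᵥ Γ) ⬝ᵥ Γ :=
    quad_ge_of_spectrum L hL (-M) (fun μ hμ => (hspec μ hμ).1) Γ
  have hWle : (L *ᵥ (U + V)) ⬝ᵥ (U + V) ≤ (-m) * ((U + V) ⬝ᵥ (U + V)) :=
    quad_le_of_spectrum L hLH (-m) (fun μ hμ => (hspec μ hμ).2) (U + V)
  have hWge : (-M) * ((U + V) ⬝ᵥ (U + V)) ≤ (L *ᵥ (U + V)) ⬝ᵥ (U + V) :=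
    quad_ge_of_spectrum L hL (-M) (fun μ hμ => (hspec μ hμ).1) (U + V)
  have hDle : ((Matrix.diagonal d) *ᵥ Γ) ⬝ᵥ Γ ≤ Φmax * (Γ ⬝ᵥ Γ) := by
    simp only [dotProduct, Matrix.mulVec_diagonal, Finset.mul_sum]
    refine Finset.sum_le_sum fun i _ => ?_
    nlinarith [(hd i).2, sq_nonneg (Γ i)]
  have hDge : Φmin * (Γ ⬝ᵥ Γ) ≤ ((Matrix.diagonal d) *ᵥ Γ) ⬝ᵥ Γ := by
    simp only [dotProduct, Matrix.mulVec_diagonal, Finset.mul_sum]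
    refine Finset.sum_le_sum fun i _ => ?_
    nlinarith [(hd i).1, sq_nonneg (Γ i)]
  constructor <;> (rw [hR]; nlinarith)
end
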